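/- (Borel–Bernstein for θ-expansions, divergence part) Let φ : ℕ₊ → (0,∞) be a function with Σ_{n≥1} 1/φ(n) = ∞. Then the set A_φ = {x ∈ Ω : a_n(x) > φ(n) for infinitely many n} has normalized Lebesgue measure λ_θ(A_φ) = 1. -/

import Mathlib

noncomputable section
open MeasureTheory Filter Set

namespace Theta

/-- θ = 1/√m -/
def th (m : ℕ) : ℝ := 1 / Real.sqrt m

/-- The θ-expansion map T_θ on [0,θ]. -/
def T (m : ℕ) (x : ℝ) : ℝ := if x = 0 then 0 else 1 / x - th m * ⌊1 / (x * th m)⌋₊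

/-- The n-th digit a_n(x) (n ≥ 1), a_n(x) = a_1(T_θ^{n-1} x) with a_1(x) = ⌊1/(xθ)⌋. -/
def a (m n : ℕ) (x : ℝ) : ℕ := ⌊1 / ((T m)^[n - 1] x * th m)⌋₊

/-- Ω: the irrationals in (0,θ). -/
def Omega (m : ℕ) : Set ℝ := {x | x ∈ Set.Ioo 0 (th m) ∧ Irrational x}

/-- Convergent numerators, shifted: `p m x (n+1)` is p_n(x), `p m x 0` is p_{-1} = 1. -/
def p (m : ℕ) (x : ℝ) : ℕ → ℝ
  | 0 => 1
  | 1 => 0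
  | n + 2 => (a m (n + 1) x) * th m * p m x (n + 1) + p m x n

/-- Convergent denominators, shifted: `q m x (n+1)` is q_n(x), `q m x 0` is q_{-1} = 0. -/
def q (m : ℕ) (x : ℝ) : ℕ → ℝ
  | 0 => 0
  | 1 => 1
  | n + 2 => (a m (n + 1) x) * th m * q m x (n + 1) + q m x n

/-- Normalized Lebesgue measure on [0,θ]: λ_θ(A) = Leb(A)/θ (as a real number). -/
def lam (m : ℕ) (A : Set ℝ) : ℝ := (volume A).toReal / th m

variable {m : ℕ}

lemma sqrtm_pos (hm : 2 ≤ m) : 0 < Real.sqrt m := by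
  apply Real.sqrt_pos.2; exact_mod_cast (by omega : 0 < m)

lemma th_pos (hm : 2 ≤ m) : 0 < th m := by
  unfold th; positivity

lemma th_mul_sqrt (hm : 2 ≤ m) : th m * Real.sqrt m = 1 := by
  unfold th; field_simp

lemma sqrt_mul_sqrt (hm : 2 ≤ m) : Real.sqrt m * Real.sqrt m = m := by
  exact Real.mul_self_sqrt (by positivity)

lemma m_th (hm : 2 ≤ m) : (m : ℝ) * th m = Real.sqrt m := by
  unfold th
  rw [mul_one_div]
  rw [div_eq_iff (ne_of_gt (sqrtm_pos hm))]
  exact (sqrt_mul_sqrt hm).symm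

lemma m_th_th (hm : 2 ≤ m) : (m : ℝ) * (th m * th m) = 1 := by
  rw [← mul_assoc, m_th hm, mul_comm, th_mul_sqrt hm]

/-- a₁, the first digit -/
lemma a_one (x : ℝ) : a m 1 x = ⌊1 / (x * th m)⌋₊ := by
  simp [a, Function.iterate_zero]

lemma a_succ (n : ℕ) (hn : 1 ≤ n) (x : ℝ) : a m (n + 1) x = a m n (T m x) := by
  unfold a
  have : n + 1 - 1 = (n - 1) + 1 := by omega
  rw [this, Function.iterate_succ_apply]

/-- first digit at least m -/
lemma a_one_ge (hm : 2 ≤ m) {x : ℝ} (hx : x ∈ Ioo 0 (th m)) : m ≤ a m 1 x := by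
  rw [a_one]
  have hθ := th_pos hm
  have hx1 := hx.1
  rw [Nat.le_floor_iff (by positivity)]
  rw [le_div_iff₀ (by nlinarith [hx.1])]
  nlinarith [hx.2, th_pos hm, m_th_th hm, hx.1]

lemma T_eq {x : ℝ} (hx : 0 < x) : T m x = 1 / x - th m * a m 1 x := by
  rw [T, if_neg (ne_of_gt hx), a_one]

/-- T maps (0,θ) into [0,θ) -/
lemma T_mem (hm : 2 ≤ m) {x : ℝ} (hx : x ∈ Ioo 0 (th m)) : T m x ∈ Ico 0 (th m) := by
  have hθ := th_pos hm
  have hx1 := hx.1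
  have harg : 0 < 1 / (x * th m) := by positivity
  rw [T, if_neg (ne_of_gt hx.1)]
  constructor
  · have h1 : (⌊1 / (x * th m)⌋₊ : ℝ) ≤ 1 / (x * th m) := Nat.floor_le harg.le
    have : th m * (⌊1 / (x * th m)⌋₊ : ℝ) ≤ th m * (1 / (x * th m)) := by
      exact mul_le_mul_of_nonneg_left h1 hθ.le
    have h2 : th m * (1 / (x * th m)) = 1 / x := by field_simp
    nlinarith [this, h2]
  · have h1 : 1 / (x * th m) < ⌊1 / (x * th m)⌋₊ + 1 := Nat.lt_floor_add_one _
    have : th m * (1 / (x * th m)) < th m * (⌊1 / (x * th m)⌋₊ + 1) :=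
      mul_lt_mul_of_pos_left h1 hθ
    have h2 : th m * (1 / (x * th m)) = 1 / x := by field_simp
    nlinarith

/-- branch identity: x = 1/(a₁ θ + T x) -/
lemma branch_eq (hm : 2 ≤ m) {x : ℝ} (hx : x ∈ Ioo 0 (th m)) :
    x = 1 / ((a m 1 x : ℝ) * th m + T m x) := by
  have h := T_eq (m := m) hx.1
  have : (a m 1 x : ℝ) * th m + T m x = 1 / x := by rw [h]; ring
  rw [this]
  field_simp

/-- inverse branch facts -/
lemma Vk_mem (hm : 2 ≤ m) {k : ℕ} (hk : m ≤ k) {z : ℝ} (hz : z ∈ Ioo 0 (th m)) :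
    1 / ((k : ℝ) * th m + z) ∈ Ioo 0 (th m) := by
  have hθ := th_pos hm
  have hk' : (m : ℝ) ≤ (k : ℝ) := by exact_mod_cast hk
  have hd : 0 < (k : ℝ) * th m + z := by nlinarith [hz.1]
  constructor
  · positivity
  · rw [div_lt_iff₀ hd]
    have : (1:ℝ) ≤ th m * ((k:ℝ) * th m) := by nlinarith [m_th_th hm]
    nlinarith [hz.1]

lemma a_one_Vk (hm : 2 ≤ m) {k : ℕ} (hk : m ≤ k) {z : ℝ} (hz : z ∈ Ioo 0 (th m)) :
    a m 1 (1 / ((k : ℝ) * th m + z)) = k := by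
  have hθ := th_pos hm
  have hk' : (m : ℝ) ≤ (k : ℝ) := by exact_mod_cast hk
  have hd : 0 < (k : ℝ) * th m + z := by nlinarith [hz.1]
  rw [a_one]
  have : 1 / (1 / ((k : ℝ) * th m + z) * th m) = (k : ℝ) + z / th m := by
    rw [one_div, one_div, mul_inv, inv_inv]
    field_simp
  rw [this]
  have h1 : 0 ≤ z / th m := div_nonneg hz.1.le hθ.le
  have h2 : z / th m < 1 := by rw [div_lt_one hθ]; exact hz.2
  rw [← Nat.cast_ofNat] at *
  have : ⌊(k : ℝ) + z / th m⌋₊ = k + ⌊z / th m⌋₊ := by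
    rw [add_comm, Nat.floor_add_natCast h1, add_comm]
  rw [this, Nat.floor_eq_zero.2 h2, add_zero]

lemma T_Vk (hm : 2 ≤ m) {k : ℕ} (hk : m ≤ k) {z : ℝ} (hz : z ∈ Ioo 0 (th m)) :
    T m (1 / ((k : ℝ) * th m + z)) = z := by
  have hθ := th_pos hm
  have hk' : (m : ℝ) ≤ (k : ℝ) := by exact_mod_cast hk
  have hd : 0 < (k : ℝ) * th m + z := by nlinarith [hz.1]
  have hne : 1 / ((k : ℝ) * th m + z) ≠ 0 := by positivity
  rw [T, if_neg hne]
  rw [show ⌊1 / (1 / ((k : ℝ) * th m + z) * th m)⌋₊ = a m 1 (1 / ((k : ℝ) * th m + z)) from (a_one _).symm]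
  rw [a_one_Vk hm hk hz]
  rw [one_div_one_div]
  ring


/-- points whose full orbit stays in (0,θ) -/
def Om (m : ℕ) : Set ℝ := {x | ∀ n : ℕ, (T m)^[n] x ∈ Ioo 0 (th m)}

lemma Om_subset : Om m ⊆ Ioo 0 (th m) := fun x hx => by
  have := hx 0; simpa using this

lemma T_mem_Om {x : ℝ} (hx : x ∈ Om m) : T m x ∈ Om m := fun n => by
  have := hx (n + 1)
  rwa [Function.iterate_succ_apply] at this

lemma iterate_mem_Om {x : ℝ} (hx : x ∈ Om m) (n : ℕ) : (T m)^[n] x ∈ Om m := by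
  induction n with
  | zero => simpa using hx
  | succ k ih => rw [Function.iterate_succ_apply']; exact T_mem_Om ih

lemma a_ge_Om (hm : 2 ≤ m) {x : ℝ} (hx : x ∈ Om m) {n : ℕ} (hn : 1 ≤ n) :
    m ≤ a m n x := by
  have : a m n x = a m 1 ((T m)^[n-1] x) := by
    rw [a_one]; rfl
  rw [this]
  exact a_one_ge hm (Om_subset (iterate_mem_Om hx (n-1)))

/-- composition of inverse branches along a list of digits -/
def G (m : ℕ) : List ℕ → ℝ → ℝ
  | [], z => z
  | k :: w, z => 1 / ((k : ℝ) * th m + G m w z)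

def Adm (m : ℕ) (w : List ℕ) : Prop := ∀ k ∈ w, m ≤ k

lemma G_mem (hm : 2 ≤ m) {w : List ℕ} (hw : Adm m w) {z : ℝ} (hz : z ∈ Ioo 0 (th m)) :
    G m w z ∈ Ioo 0 (th m) := by
  induction w with
  | nil => exact hz
  | cons k t ih =>
      exact Vk_mem hm (hw k (List.mem_cons_self)) (ih (fun j hj => hw j (List.mem_cons_of_mem _ hj)))

lemma T_G (hm : 2 ≤ m) {k : ℕ} (hk : m ≤ k) {w : List ℕ} (hw : Adm m w)
    {z : ℝ} (hz : z ∈ Ioo 0 (th m)) : T m (G m (k :: w) z) = G m w z := by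
  exact T_Vk hm hk (G_mem hm hw hz)

lemma G_mem_Om (hm : 2 ≤ m) {w : List ℕ} (hw : Adm m w) {z : ℝ} (hz : z ∈ Om m) :
    G m w z ∈ Om m := by
  induction w with
  | nil => exact hz
  | cons k t ih =>
      intro n
      cases n with
      | zero =>
          simpa using G_mem hm hw (Om_subset hz)
      | succ j =>
          rw [Function.iterate_succ_apply,
            T_G hm (hw k (List.mem_cons_self)) (fun i hi => hw i (List.mem_cons_of_mem _ hi)) (Om_subset hz)]
          exact ih (fun i hi => hw i (List.mem_cons_of_mem _ hi)) j

/-- digits of a branch image -/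
lemma a_G (hm : 2 ≤ m) {w : List ℕ} (hw : Adm m w) {z : ℝ} (hz : z ∈ Ioo 0 (th m))
    {i : ℕ} (hi : i < w.length) : a m (i + 1) (G m w z) = w.get ⟨i, hi⟩ := by
  induction w generalizing i z with
  | nil => simp at hi
  | cons k t ih =>
      have hk := hw k (List.mem_cons_self)
      have ht : Adm m t := fun j hj => hw j (List.mem_cons_of_mem _ hj)
      cases i with
      | zero =>
          simpa [G] using a_one_Vk hm hk (G_mem hm ht hz)
      | succ i' =>
          have h1 : a m (i' + 1 + 1) (G m (k :: t) z) = a m (i' + 1) (T m (G m (k :: t) z)) :=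
            a_succ _ (by omega) _
          rw [h1, T_G hm hk ht hz]
          exact ih ht hz (by simpa using Nat.lt_of_succ_lt_succ hi)

/-- x is the branch image of its digits applied to T^n x -/
lemma G_digits (hm : 2 ≤ m) {x : ℝ} (hx : x ∈ Om m) (n : ℕ) :
    G m (List.ofFn fun i : Fin n => a m (i + 1) x) ((T m)^[n] x) = x := by
  induction n generalizing x with
  | zero => simp [G]
  | succ n ih =>
      have hTx : T m x ∈ Om m := T_mem_Om hx
      have hshift : (List.ofFn fun i : Fin (n+1) => a m (i + 1) x)
          = a m 1 x :: (List.ofFn fun i : Fin n => a m (i + 1) (T m x)) := by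
        rw [List.ofFn_succ]
        congr 1
      rw [hshift]
      have h2 : (T m)^[n+1] x = (T m)^[n] (T m x) := Function.iterate_succ_apply _ _ _
      rw [h2]
      show 1 / ((a m 1 x : ℝ) * th m + G m _ ((T m)^[n] (T m x))) = x
      rw [ih hTx]
      exact (branch_eq hm (Om_subset hx)).symm


/-- Möbius coefficients ((A,B),(C,D)) of G along a word: G w z = (A z + B)/(C z + D). -/
def co (m : ℕ) : List ℕ → (ℝ × ℝ) × (ℝ × ℝ)
  | [] => ((1, 0), (0, 1))
  | k :: w =>
      let P := co m w
      ((P.2.1, P.2.2), ((k : ℝ) * th m * P.2.1 + P.1.1, (k : ℝ) * th m * P.2.2 + P.1.2))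

def coA (m : ℕ) (w : List ℕ) : ℝ := (co m w).1.1
def coB (m : ℕ) (w : List ℕ) : ℝ := (co m w).1.2
def coC (m : ℕ) (w : List ℕ) : ℝ := (co m w).2.1
def coD (m : ℕ) (w : List ℕ) : ℝ := (co m w).2.2

lemma co_cons (k : ℕ) (w : List ℕ) :
    coA m (k :: w) = coC m w ∧ coB m (k :: w) = coD m w ∧
    coC m (k :: w) = (k : ℝ) * th m * coC m w + coA m w ∧
    coD m (k :: w) = (k : ℝ) * th m * coD m w + coB m w := by
  refine ⟨rfl, rfl, rfl, rfl⟩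

lemma co_spec (hm : 2 ≤ m) {w : List ℕ} (hw : Adm m w) :
    (0 ≤ coA m w ∧ 0 ≤ coB m w ∧ 0 ≤ coC m w ∧ 0 < coD m w) ∧
    (coA m w * coD m w - coB m w * coC m w = 1 ∨ coA m w * coD m w - coB m w * coC m w = -1) ∧
    (∀ z : ℝ, 0 ≤ z → G m w z = (coA m w * z + coB m w) / (coC m w * z + coD m w)) := by
  have hθ := th_pos hm
  induction w with
  | nil =>
      refine ⟨⟨zero_le_one, le_refl 0, le_refl 0, zero_lt_one⟩, Or.inl (by simp [coA, coB, coC, coD, co]), ?_⟩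
      intro z hz
      show G m [] z = (1 * z + 0) / (0 * z + 1)
      simp [G]
  | cons k t ih =>
      have hk : m ≤ k := hw k (List.mem_cons_self)
      have hkpos : (0:ℝ) < (k : ℝ) * th m := by
        have : (1:ℝ) ≤ (k:ℝ) := by exact_mod_cast le_trans (by omega) hk
        nlinarith
      have ht : Adm m t := fun j hj => hw j (List.mem_cons_of_mem _ hj)
      obtain ⟨⟨hA, hB, hC, hD⟩, hdet, hform⟩ := ih ht
      obtain ⟨e1, e2, e3, e4⟩ := co_cons (m := m) k t
      have hdenom : ∀ z : ℝ, 0 ≤ z → 0 < coC m t * z + coD m t := by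
        intro z hz; nlinarith
      have hGnn : ∀ z : ℝ, 0 ≤ z → 0 ≤ G m t z := by
        intro z hz
        rw [hform z hz]
        have := hdenom z hz
        positivity
      refine ⟨⟨by rw [e1]; exact hC, by rw [e2]; exact hD.le,
        by rw [e3]; nlinarith, by rw [e4]; nlinarith⟩, ?_, ?_⟩
      · rw [e1, e2, e3, e4]
        rcases hdet with h | h
        · right; nlinarith
        · left; nlinarith
      · intro z hz
        have hGz := hGnn z hz
        have hden := hdenom z hz
        show 1 / ((k : ℝ) * th m + G m t z) = _
        rw [e1, e2, e3, e4, hform z hz]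
        rw [div_eq_div_iff (by positivity) (by nlinarith)]
        field_simp
        ring

/-- difference formula -/
lemma G_sub (hm : 2 ≤ m) {w : List ℕ} (hw : Adm m w) {u v : ℝ} (hu : 0 ≤ u) (hv : 0 ≤ v) :
    G m w v - G m w u = (coA m w * coD m w - coB m w * coC m w) * (v - u) /
      ((coC m w * u + coD m w) * (coC m w * v + coD m w)) := by
  obtain ⟨⟨hA, hB, hC, hD⟩, _, hform⟩ := co_spec hm hw
  have h1 : 0 < coC m w * u + coD m w := by nlinarith
  have h2 : 0 < coC m w * v + coD m w := by nlinarith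
  rw [hform u hu, hform v hv]
  field_simp
  ring

/-- absolute difference for ordered points -/
lemma G_dist (hm : 2 ≤ m) {w : List ℕ} (hw : Adm m w) {u v : ℝ} (hu : 0 ≤ u) (huv : u ≤ v) :
    |G m w v - G m w u| = (v - u) /
      ((coC m w * u + coD m w) * (coC m w * v + coD m w)) := by
  obtain ⟨⟨hA, hB, hC, hD⟩, hdet, _⟩ := co_spec hm hw
  have hv : 0 ≤ v := le_trans hu huv
  have h1 : 0 < coC m w * u + coD m w := by nlinarith
  have h2 : 0 < coC m w * v + coD m w := by nlinarith
  have hp : (0:ℝ) ≤ (coC m w * u + coD m w) * (coC m w * v + coD m w) := (mul_pos h1 h2).le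
  have e := G_sub hm hw hu hv
  rcases hdet with h | h <;> rw [h] at e <;> rw [e]
  · rw [one_mul, abs_of_nonneg (div_nonneg (by linarith) hp)]
  · rw [neg_one_mul, abs_of_nonpos (div_nonpos_of_nonpos_of_nonneg (by linarith) hp),
      neg_div, neg_neg]

/-- image of an interval lies between the endpoint images -/
lemma G_between (hm : 2 ≤ m) {w : List ℕ} (hw : Adm m w) {u v z : ℝ} (hu : 0 ≤ u)
    (hz : z ∈ Icc u v) : G m w z ∈ uIcc (G m w u) (G m w v) := by
  obtain ⟨⟨hA, hB, hC, hD⟩, hdet, _⟩ := co_spec hm hw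
  have hzu : u ≤ z := hz.1
  have hzv : z ≤ v := hz.2
  have hz0 : 0 ≤ z := le_trans hu hzu
  have hv0 : 0 ≤ v := le_trans hz0 hzv
  have d1 := G_sub hm hw hu hz0
  have d2 := G_sub hm hw hz0 hv0
  have p1 : 0 < coC m w * u + coD m w := by nlinarith
  have p2 : 0 < coC m w * z + coD m w := by nlinarith
  have p3 : 0 < coC m w * v + coD m w := by nlinarith
  rcases hdet with h | h <;> rw [h] at d1 d2
  · apply Set.mem_uIcc.2
    left
    constructor
    · have : 0 ≤ G m w z - G m w u := by
        rw [d1, one_mul]; exact div_nonneg (by linarith) (mul_pos p1 p2).le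
      linarith
    · have : 0 ≤ G m w v - G m w z := by
        rw [d2, one_mul]; exact div_nonneg (by linarith) (mul_pos p2 p3).le
      linarith
  · apply Set.mem_uIcc.2
    right
    constructor
    · have : G m w v - G m w z ≤ 0 := by
        rw [d2, neg_one_mul]
        exact div_nonpos_of_nonpos_of_nonneg (by linarith) (mul_pos p2 p3).le
      linarith
    · have : G m w z - G m w u ≤ 0 := by
        rw [d1, neg_one_mul]
        exact div_nonpos_of_nonpos_of_nonneg (by linarith) (mul_pos p1 p2).le
      linarith


lemma measurable_T : Measurable (T m) := by
  have h1 : Measurable fun x : ℝ => 1 / (x * th m) :=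
    measurable_const.div (measurable_id.mul_const _)
  have h2 : Measurable fun x : ℝ => 1 / x - th m * (⌊1 / (x * th m)⌋₊ : ℝ) := by
    apply Measurable.sub
    · exact measurable_const.div measurable_id
    · exact measurable_const.mul (measurable_from_top.comp (Nat.measurable_floor.comp h1))
  exact Measurable.ite (measurableSet_eq) measurable_const h2

lemma measurable_a (n : ℕ) : Measurable (a m n) := by
  have h1 : Measurable fun x : ℝ => 1 / ((T m)^[n-1] x * th m) :=
    measurable_const.div ((measurable_T.iterate (n-1)).mul_const _)
  exact Nat.measurable_floor.comp h1

lemma measurableSet_Om : MeasurableSet (Om m) := by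
  have : Om m = ⋂ n : ℕ, (T m)^[n] ⁻¹' (Ioo 0 (th m)) := by
    ext x; simp [Om]
  rw [this]
  exact MeasurableSet.iInter fun n => (measurable_T.iterate n) measurableSet_Ioo

/-- preimages of countable sets under T inside (0,θ) are countable -/
lemma preimage_countable (hm : 2 ≤ m) {S : Set ℝ} (hS : S.Countable) :
    Set.Countable {x | x ∈ Ioo 0 (th m) ∧ T m x ∈ S} := by
  apply Set.Countable.mono ?_ (hS.biUnion fun y _ =>
    Set.countable_range fun k : ℕ => 1 / ((k : ℝ) * th m + y))
  rintro x ⟨hx, hTx⟩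
  refine Set.mem_biUnion hTx ⟨a m 1 x, ?_⟩
  exact (branch_eq hm hx).symm

/-- points that eventually escape -/
lemma bad_countable (hm : 2 ≤ m) : Set.Countable (Ioo 0 (th m) \ Om m) := by
  have hC : ∀ n : ℕ, Set.Countable {x | x ∈ Ioo 0 (th m) ∧ (T m)^[n] x ∉ Ioo 0 (th m)} := by
    intro n
    induction n with
    | zero =>
        have : {x | x ∈ Ioo 0 (th m) ∧ (T m)^[0] x ∉ Ioo 0 (th m)} = ∅ := by
          ext x; simp only [Function.iterate_zero, id_eq, mem_setOf_eq, mem_empty_iff_false,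
            iff_false, not_and, not_not]
          exact fun h => h
        rw [this]; exact Set.countable_empty
    | succ n ih =>
        have hsub : {x | x ∈ Ioo 0 (th m) ∧ (T m)^[n+1] x ∉ Ioo 0 (th m)} ⊆
            {x | x ∈ Ioo 0 (th m) ∧ T m x ∈ ({0} ∪ {y | y ∈ Ioo 0 (th m) ∧ (T m)^[n] y ∉ Ioo 0 (th m)})} := by
          rintro x ⟨hx, hesc⟩
          refine ⟨hx, ?_⟩
          rcases eq_or_ne (T m x) 0 with h0 | h0
          · exact Or.inl h0
          · right
            have hTx : T m x ∈ Ioo 0 (th m) := by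
              have := T_mem hm hx
              exact ⟨lt_of_le_of_ne this.1 (Ne.symm h0), this.2⟩
            refine ⟨hTx, ?_⟩
            rwa [Function.iterate_succ_apply] at hesc
        exact Set.Countable.mono hsub
          (preimage_countable hm ((Set.countable_singleton 0).union ih))
  apply Set.Countable.mono ?_ (Set.countable_iUnion hC)
  rintro x ⟨hx, hOm⟩
  simp only [Om, mem_setOf_eq, not_forall] at hOm
  obtain ⟨n, hn⟩ := hOm
  exact Set.mem_iUnion.2 ⟨n, hx, hn⟩


lemma a_succ_eq (n : ℕ) (x : ℝ) : a m (n + 1) x = a m 1 ((T m)^[n] x) := by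
  rw [a_one]; unfold a; norm_num

/-- rank-n cylinders, indexed by digit vectors -/
def cyl (m n : ℕ) (w : Fin n → ℕ) : Set ℝ :=
  {x | x ∈ Om m ∧ ∀ i : Fin n, a m ((i : ℕ) + 1) x = w i}

/-- the sets of points obeying the bound up to time n (constraints on digits N+1..n) -/
def Fset (m N : ℕ) (φ : ℕ → ℝ) (n : ℕ) : Set ℝ :=
  {x | x ∈ Om m ∧ ∀ j : ℕ, N < j → j ≤ n → (a m j x : ℝ) ≤ φ j}

def rho (m : ℕ) (φ : ℕ → ℝ) (j : ℕ) : ℝ := max 0 (1 - m / (⌊φ j⌋₊ + 1))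

lemma rho_nonneg : 0 ≤ rho m φ j := le_max_left _ _

lemma measurableSet_cyl (n : ℕ) (w : Fin n → ℕ) : MeasurableSet (cyl m n w) := by
  have : cyl m n w = Om m ∩ ⋂ i : Fin n, (a m ((i : ℕ) + 1)) ⁻¹' {w i} := by
    ext x; simp [cyl, Set.mem_iInter]
  rw [this]
  exact measurableSet_Om.inter (MeasurableSet.iInter fun i => measurable_a _ (by trivial))

lemma measurableSet_Fset (N : ℕ) (φ : ℕ → ℝ) (n : ℕ) : MeasurableSet (Fset m N φ n) := by
  have : Fset m N φ n = Om m ∩ ⋂ j : ℕ, ⋂ (_ : N < j), ⋂ (_ : j ≤ n),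
      (a m j) ⁻¹' {k : ℕ | (k : ℝ) ≤ φ j} := by
    ext x; simp [Fset, Set.mem_iInter]
  rw [this]
  refine measurableSet_Om.inter (MeasurableSet.iInter fun j => ?_)
  exact MeasurableSet.iInter fun _ => MeasurableSet.iInter fun _ => measurable_a _ (by trivial)

lemma cyl_disjoint (n : ℕ) : Pairwise (Function.onFun Disjoint fun w : Fin n → ℕ => cyl m n w) := by
  intro w w' hww
  simp only [Function.onFun]
  rw [Set.disjoint_left]
  rintro x ⟨_, hx⟩ ⟨_, hx'⟩
  exact hww (funext fun i => (hx i).symm.trans (hx' i))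

lemma mem_cyl_self (n : ℕ) {x : ℝ} (hx : x ∈ Om m) : x ∈ cyl m n (fun i => a m ((i:ℕ)+1) x) :=
  ⟨hx, fun _ => rfl⟩

lemma a_G_ofFn (hm : 2 ≤ m) {n : ℕ} {w : Fin n → ℕ} (hw : ∀ i, m ≤ w i)
    {z : ℝ} (hz : z ∈ Ioo 0 (th m)) (i : Fin n) :
    a m ((i:ℕ) + 1) (G m (List.ofFn w) z) = w i := by
  have hAdm : Adm m (List.ofFn w) := by
    intro k hk
    rw [List.mem_ofFn] at hk
    obtain ⟨j, hj⟩ := hk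
    exact hj ▸ hw j
  have hi : (i:ℕ) < (List.ofFn w).length := by simp
  rw [a_G hm hAdm hz hi]
  simp

/-- The per-cylinder contraction estimate, and the resulting global step. -/
lemma step (hm : 2 ≤ m) (φ : ℕ → ℝ) (N n : ℕ) (hn : N ≤ n) :
    volume (Fset m N φ (n+1)) ≤ ENNReal.ofReal (rho m φ (n+1)) * volume (Fset m N φ n) := by
  have hθ := th_pos hm
  -- the per-cylinder estimate
  have percyl : ∀ w : Fin n → ℕ,
      volume (Fset m N φ (n+1) ∩ cyl m n w) ≤
        ENNReal.ofReal (rho m φ (n+1)) * volume (Fset m N φ n ∩ cyl m n w) := by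
    intro w
    by_cases hadm : (∀ i : Fin n, m ≤ w i) ∧
        ∀ i : Fin n, N < (i:ℕ) + 1 → ((w i : ℝ) ≤ φ ((i:ℕ)+1))
    · -- admissible cylinder
      obtain ⟨hwm, hwφ⟩ := hadm
      set K := ⌊φ (n+1)⌋₊ with hKdef
      by_cases hK : m ≤ K
      · -- main case
        set L := List.ofFn w with hL
        have hAdmL : Adm m L := by
          intro k hk
          rw [hL, List.mem_ofFn] at hk
          obtain ⟨i, hi⟩ := hk
          exact hi ▸ hwm i
        obtain ⟨⟨hA, hB, hC, hD⟩, hdet, hform⟩ := co_spec hm hAdmL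
        set A := coA m L; set B := coB m L; set C := coC m L; set D := coD m L
        set s : ℝ := 1 / (((K:ℝ) + 1) * th m) with hs
        have hKpos : (0:ℝ) < (K:ℝ) + 1 := by positivity
        have hspos : 0 < s := by rw [hs]; positivity
        have hmK : (m:ℝ) ≤ (K:ℝ) := by exact_mod_cast hK
        have hsθ : s ≤ th m := by
          rw [hs, div_le_iff₀ (by positivity)]
          have h1 : (1:ℝ) ≤ (m:ℝ) * (th m * th m) := le_of_eq (m_th_th hm).symm
          nlinarith
        -- upper bound for the new set
        have hupper : Fset m N φ (n+1) ∩ cyl m n w ⊆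
            uIcc (G m L s) (G m L (th m)) := by
          rintro x ⟨⟨hxOm, hxF⟩, ⟨_, hxcyl⟩⟩
          set z := (T m)^[n] x with hz
          have hzIoo : z ∈ Ioo 0 (th m) := hxOm n
          have hxa : (a m (n+1) x : ℝ) ≤ φ (n+1) := hxF (n+1) (by omega) (le_refl _)
          have haK : a m 1 z ≤ K := by
            rw [hKdef]
            apply Nat.le_floor
            rw [← a_succ_eq]
            exact hxa
          have hz0 : 0 < z := hzIoo.1
          have hzθ0 : 0 < z * th m := mul_pos hz0 hθ
          have hzs : s ≤ z := by
            have h1 : 1 / (z * th m) < (K:ℝ) + 1 := by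
              rw [a_one] at haK
              have h2 : ⌊1 / (z * th m)⌋₊ < K + 1 := by omega
              have h3 := (Nat.floor_lt (le_of_lt (div_pos one_pos hzθ0))).1
                (by exact_mod_cast h2)
              exact_mod_cast h3
            rw [hs]
            rw [div_le_iff₀ (by positivity)]
            rw [div_lt_iff₀ hzθ0] at h1
            nlinarith
          have hxG : G m L z = x := by
            have h1 := G_digits hm hxOm n
            have h2 : (fun i : Fin n => a m ((i:ℕ) + 1) x) = w := funext fun i => hxcyl i
            rw [hL, ← h2]
            exact h1
          rw [← hxG]
          exact G_between hm hAdmL hspos.le ⟨hzs, hzIoo.2.le⟩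
        -- lower bound for the old set
        have hlower : ENNReal.ofReal (th m / (D * (C * th m + D))) ≤
            volume (Fset m N φ n ∩ cyl m n w) := by
          have himg : G m L '' (Om m) ⊆ Fset m N φ n ∩ cyl m n w := by
            rintro x ⟨z, hzOm, rfl⟩
            have hGOm := G_mem_Om hm hAdmL hzOm
            have hdig : ∀ i : Fin n, a m ((i:ℕ)+1) (G m L z) = w i := by
              intro i
              exact a_G_ofFn hm hwm (Om_subset hzOm) i
            refine ⟨⟨hGOm, ?_⟩, hGOm, hdig⟩
            intro j hNj hjn
            have hj1 : 1 ≤ j := by omega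
            have hij : j - 1 < n := by omega
            have : a m j (G m L z) = w ⟨j-1, hij⟩ := by
              have := hdig ⟨j-1, hij⟩
              simpa [Nat.sub_add_cancel hj1] using this
            rw [this]
            have := hwφ ⟨j-1, hij⟩ (by simp; omega)
            simpa [Nat.sub_add_cancel hj1] using this
          -- the image of (0,θ) contains the open interval between endpoint values
          have hcont : ContinuousOn (G m L) (Icc 0 (th m)) := by
            apply ContinuousOn.congr (f := fun z => (A * z + B) / (C * z + D))
            · apply ContinuousOn.div
              · exact ((continuousOn_const.mul continuousOn_id).add continuousOn_const)
              · exact ((continuousOn_const.mul continuousOn_id).add continuousOn_const)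
              · intro z hz
                have : 0 < C * z + D := by nlinarith [hz.1]
                exact ne_of_gt this
            · intro z hz
              exact hform z hz.1
          have hIoo : Ioo (G m L 0) (G m L (th m)) ∪ Ioo (G m L (th m)) (G m L 0) ⊆
              G m L '' (Ioo 0 (th m)) := by
            apply Set.union_subset
            · exact intermediate_value_Ioo hθ.le hcont
            · exact intermediate_value_Ioo' hθ.le hcont
          have hνcount : volume (G m L '' (Ioo 0 (th m) \ Om m)) = 0 :=
            Set.Countable.measure_zero ((bad_countable hm).image _) _
          have hcover : G m L '' (Ioo 0 (th m)) ⊆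
              (G m L '' (Om m)) ∪ (G m L '' (Ioo 0 (th m) \ Om m)) := by
            rw [← Set.image_union]
            apply Set.image_mono
            intro z hz
            by_cases h : z ∈ Om m
            · exact Or.inl h
            · exact Or.inr ⟨hz, h⟩
          have hvol1 : ENNReal.ofReal (th m / (D * (C * th m + D))) ≤
              volume (G m L '' (Ioo 0 (th m))) := by
            have hdist := G_dist hm hAdmL (le_refl (0:ℝ)) hθ.le
            have hd0 : C * 0 + D = D := by ring
            rw [hd0] at hdist
            have : th m / (D * (C * th m + D)) = |G m L (th m) - G m L 0| := by
              rw [hdist]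
              show th m / (D * (C * th m + D)) = (th m - 0) / (D * (C * th m + D))
              rw [sub_zero]
            rw [this]
            rcases le_or_gt (G m L 0) (G m L (th m)) with hor | hor
            · calc ENNReal.ofReal |G m L (th m) - G m L 0|
                  = volume (Ioo (G m L 0) (G m L (th m))) := by
                    rw [Real.volume_Ioo, abs_of_nonneg (by linarith)]
                _ ≤ _ := measure_mono (fun y hy => hIoo (Or.inl hy))
            · calc ENNReal.ofReal |G m L (th m) - G m L 0|
                  = volume (Ioo (G m L (th m)) (G m L 0)) := by
                    rw [Real.volume_Ioo, abs_of_nonpos (by linarith)]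
                    congr 1; ring
                _ ≤ _ := measure_mono (fun y hy => hIoo (Or.inr hy))
          calc ENNReal.ofReal (th m / (D * (C * th m + D)))
              ≤ volume (G m L '' (Ioo 0 (th m))) := hvol1
            _ ≤ volume ((G m L '' (Om m)) ∪ (G m L '' (Ioo 0 (th m) \ Om m))) :=
                measure_mono hcover
            _ ≤ volume (G m L '' (Om m)) + volume (G m L '' (Ioo 0 (th m) \ Om m)) :=
                measure_union_le _ _
            _ = volume (G m L '' (Om m)) := by rw [hνcount, add_zero]
            _ ≤ volume (Fset m N φ n ∩ cyl m n w) := measure_mono himg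
        -- combine
        have hDpos : 0 < C * s + D := by nlinarith
        have hDθ : 0 < C * th m + D := by nlinarith
        have hratio : (th m - s) / ((C * s + D) * (C * th m + D)) ≤
            rho m φ (n+1) * (th m / (D * (C * th m + D))) := by
          have hrho : rho m φ (n+1) = 1 - (m:ℝ) / ((K:ℝ) + 1) := by
            unfold rho
            rw [← hKdef]
            rw [max_eq_right]
            rw [sub_nonneg, div_le_one hKpos]
            linarith
          have hsm : s / th m = (m:ℝ) / ((K:ℝ)+1) := by
            have hθθ := m_th_th hm
            rw [hs, div_div, div_eq_div_iff (by positivity) (ne_of_gt hKpos)]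
            nlinarith
          have key : rho m φ (n+1) * th m = th m - s := by
            rw [hrho, ← hsm]
            field_simp
          rw [show rho m φ (n+1) * (th m / (D * (C * th m + D)))
              = (rho m φ (n+1) * th m) / (D * (C * th m + D)) by ring, key]
          rw [div_le_div_iff₀ (by positivity) (by positivity)]
          have hkey : 0 ≤ (th m - s) * ((C * th m + D) * (C * s)) :=
            mul_nonneg (sub_nonneg.2 hsθ) (mul_nonneg hDθ.le (mul_nonneg hC hspos.le))
          nlinarith [hkey]
        calc volume (Fset m N φ (n+1) ∩ cyl m n w)
            ≤ volume (uIcc (G m L s) (G m L (th m))) := measure_mono hupper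
          _ = ENNReal.ofReal |G m L (th m) - G m L s| := by
              rw [Real.volume_interval]
          _ = ENNReal.ofReal ((th m - s) / ((C * s + D) * (C * th m + D))) := by
              rw [G_dist hm hAdmL hspos.le hsθ]
          _ ≤ ENNReal.ofReal (rho m φ (n+1) * (th m / (D * (C * th m + D)))) :=
              ENNReal.ofReal_le_ofReal hratio
          _ = ENNReal.ofReal (rho m φ (n+1)) * ENNReal.ofReal (th m / (D * (C * th m + D))) :=
              ENNReal.ofReal_mul rho_nonneg
          _ ≤ ENNReal.ofReal (rho m φ (n+1)) * volume (Fset m N φ n ∩ cyl m n w) := by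
              exact mul_le_mul_right hlower _
      · -- φ(n+1) < m: the constrained set is empty
        have : Fset m N φ (n+1) ∩ cyl m n w = ∅ := by
          rw [Set.eq_empty_iff_forall_notMem]
          rintro x ⟨⟨hxOm, hxF⟩, _⟩
          have h1 : (a m (n+1) x : ℝ) ≤ φ (n+1) := hxF (n+1) (by omega) (le_refl _)
          have h2 : a m (n+1) x ≤ K := Nat.le_floor h1
          have h3 : m ≤ a m (n+1) x := a_ge_Om hm hxOm (by omega)
          omega
        rw [this]
        simp
    · -- non-admissible cylinder: the new set is empty
      have : Fset m N φ (n+1) ∩ cyl m n w = ∅ := by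
        rw [Set.eq_empty_iff_forall_notMem]
        rintro x ⟨⟨hxOm, hxF⟩, ⟨_, hxcyl⟩⟩
        apply hadm
        constructor
        · intro i
          rw [← hxcyl i]
          exact a_ge_Om hm hxOm (by omega)
        · intro i hNi
          rw [← hxcyl i]
          exact hxF ((i:ℕ)+1) hNi (by omega)
      rw [this]
      simp
  -- sum over cylinders
  have cover1 : Fset m N φ (n+1) = ⋃ w : Fin n → ℕ, (Fset m N φ (n+1) ∩ cyl m n w) := by
    ext x
    constructor
    · intro hx
      exact Set.mem_iUnion.2 ⟨fun i => a m ((i:ℕ)+1) x, hx, mem_cyl_self n hx.1⟩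
    · rintro hx
      obtain ⟨w, hw, _⟩ := Set.mem_iUnion.1 hx
      exact hw
  have cover2 : Fset m N φ n = ⋃ w : Fin n → ℕ, (Fset m N φ n ∩ cyl m n w) := by
    ext x
    constructor
    · intro hx
      exact Set.mem_iUnion.2 ⟨fun i => a m ((i:ℕ)+1) x, hx, mem_cyl_self n hx.1⟩
    · rintro hx
      obtain ⟨w, hw, _⟩ := Set.mem_iUnion.1 hx
      exact hw
  have hdisj1 : Pairwise (Function.onFun Disjoint fun w : Fin n → ℕ =>
      Fset m N φ (n+1) ∩ cyl m n w) := by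
    intro w w' hww
    exact Set.disjoint_of_subset (Set.inter_subset_right) (Set.inter_subset_right)
      (cyl_disjoint n hww)
  have hdisj2 : Pairwise (Function.onFun Disjoint fun w : Fin n → ℕ =>
      Fset m N φ n ∩ cyl m n w) := by
    intro w w' hww
    exact Set.disjoint_of_subset (Set.inter_subset_right) (Set.inter_subset_right)
      (cyl_disjoint n hww)
  have hmeas1 : ∀ w : Fin n → ℕ, MeasurableSet (Fset m N φ (n+1) ∩ cyl m n w) :=
    fun w => (measurableSet_Fset N φ (n+1)).inter (measurableSet_cyl n w)
  have hmeas2 : ∀ w : Fin n → ℕ, MeasurableSet (Fset m N φ n ∩ cyl m n w) :=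
    fun w => (measurableSet_Fset N φ n).inter (measurableSet_cyl n w)
  calc volume (Fset m N φ (n+1))
      = ∑' w : Fin n → ℕ, volume (Fset m N φ (n+1) ∩ cyl m n w) := by
        conv_lhs => rw [cover1]
        exact measure_iUnion hdisj1 hmeas1
    _ ≤ ∑' w : Fin n → ℕ, ENNReal.ofReal (rho m φ (n+1)) * volume (Fset m N φ n ∩ cyl m n w) :=
        ENNReal.tsum_le_tsum percyl
    _ = ENNReal.ofReal (rho m φ (n+1)) * ∑' w : Fin n → ℕ, volume (Fset m N φ n ∩ cyl m n w) :=
        ENNReal.tsum_mul_left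
    _ = ENNReal.ofReal (rho m φ (n+1)) * volume (Fset m N φ n) := by
        rw [← measure_iUnion hdisj2 hmeas2, ← cover2]


lemma Fset_subset_Ioo : Fset m N φ n ⊆ Ioo 0 (th m) := fun x hx => Om_subset hx.1

lemma Fset_bound (hm : 2 ≤ m) (φ : ℕ → ℝ) (N : ℕ) :
    ∀ n, N ≤ n → volume (Fset m N φ n) ≤
      ENNReal.ofReal (th m * ∏ j ∈ Finset.Ioc N n, rho m φ j) := by
  have hθ := th_pos hm
  intro n hn
  induction n, hn using Nat.le_induction with
  | base =>
      rw [Finset.Ioc_self, Finset.prod_empty, mul_one]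
      calc volume (Fset m N φ N) ≤ volume (Ioo 0 (th m)) := measure_mono Fset_subset_Ioo
        _ = ENNReal.ofReal (th m) := by rw [Real.volume_Ioo, sub_zero]
  | succ n hNn ih =>
      have hprodnn : 0 ≤ th m * ∏ j ∈ Finset.Ioc N n, rho m φ j :=
        mul_nonneg hθ.le (Finset.prod_nonneg fun j _ => rho_nonneg)
      calc volume (Fset m N φ (n+1))
          ≤ ENNReal.ofReal (rho m φ (n+1)) * volume (Fset m N φ n) := step hm φ N n hNn
        _ ≤ ENNReal.ofReal (rho m φ (n+1)) *
            ENNReal.ofReal (th m * ∏ j ∈ Finset.Ioc N n, rho m φ j) :=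
            mul_le_mul_right ih _
        _ = ENNReal.ofReal (rho m φ (n+1) * (th m * ∏ j ∈ Finset.Ioc N n, rho m φ j)) :=
            (ENNReal.ofReal_mul rho_nonneg).symm
        _ = ENNReal.ofReal (th m * ∏ j ∈ Finset.Ioc N (n+1), rho m φ j) := by
            rw [Finset.prod_Ioc_succ_top (by omega)]
            ring_nf

/-- the limit sets -/
def FsetInf (m N : ℕ) (φ : ℕ → ℝ) : Set ℝ :=
  {x | x ∈ Om m ∧ ∀ j : ℕ, N < j → (a m j x : ℝ) ≤ φ j}

lemma FsetInf_subset (N n : ℕ) : FsetInf m N φ ⊆ Fset m N φ n :=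
  fun x hx => ⟨hx.1, fun j hj _ => hx.2 j hj⟩

/-- the lower bound sequence for the exponent -/
def useq (m : ℕ) (φ : ℕ → ℝ) (j : ℕ) : ℝ := min 1 ((m : ℝ) / (⌊φ j⌋₊ + 1))

lemma useq_nonneg : 0 ≤ useq m φ j := le_min zero_le_one (by positivity)

lemma rho_le_exp (hm : 2 ≤ m) (φ : ℕ → ℝ) (j : ℕ) :
    rho m φ j ≤ Real.exp (-(useq m φ j)) := by
  set t := (m : ℝ) / (⌊φ j⌋₊ + 1) with ht
  have htpos : 0 < t := by positivity
  rcases le_or_gt t 1 with h | h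
  · have : useq m φ j = t := min_eq_right h
    rw [this]
    have h2 : rho m φ j = 1 - t := by
      unfold rho; rw [max_eq_right (by linarith)]
    rw [h2]
    linarith [Real.add_one_le_exp (-t)]
  · have h2 : rho m φ j = 0 := by
      unfold rho; rw [max_eq_left (by linarith)]
    rw [h2]
    positivity

lemma prod_rho_le (hm : 2 ≤ m) (φ : ℕ → ℝ) (N n : ℕ) :
    ∏ j ∈ Finset.Ioc N n, rho m φ j ≤
      Real.exp (-(∑ j ∈ Finset.Ioc N n, useq m φ j)) := by
  calc ∏ j ∈ Finset.Ioc N n, rho m φ j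
      ≤ ∏ j ∈ Finset.Ioc N n, Real.exp (-(useq m φ j)) :=
        Finset.prod_le_prod (fun j _ => rho_nonneg) (fun j _ => rho_le_exp hm φ j)
    _ = Real.exp (∑ j ∈ Finset.Ioc N n, -(useq m φ j)) := (Real.exp_sum _ _).symm
    _ = Real.exp (-(∑ j ∈ Finset.Ioc N n, useq m φ j)) := by rw [Finset.sum_neg_distrib]

/-- 1/φ ≤ u pointwise (in min-truncated form) -/
lemma min_le_useq (hm : 2 ≤ m) (φ : ℕ → ℝ) {j : ℕ} (hj : 1 ≤ j) (hφj : 0 < φ j) :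
    min 1 (1 / φ j) ≤ useq m φ j := by
  rcases le_or_gt 1 (φ j) with h | h
  · have h2 : 1 / φ j ≤ (m : ℝ) / ((⌊φ j⌋₊ : ℝ) + 1) := by
      have hfl := Nat.floor_le (le_of_lt hφj)
      rw [div_le_div_iff₀ hφj (by positivity)]
      have hm2 : (2:ℝ) ≤ (m:ℝ) := by exact_mod_cast hm
      nlinarith
    exact min_le_min (le_refl 1) h2
  · have h0 : ⌊φ j⌋₊ = 0 := Nat.floor_eq_zero.2 h
    have : useq m φ j = 1 := by
      unfold useq
      rw [h0]
      rw [min_eq_left]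
      · norm_num
        exact_mod_cast le_trans (by norm_num) hm
    rw [this]
    exact min_le_left _ _

lemma not_summable_useq (hm : 2 ≤ m) (φ : ℕ → ℝ) (hφ : ∀ n, 1 ≤ n → 0 < φ n)
    (hs : ¬ Summable fun n : ℕ => 1 / φ (n + 1)) :
    ¬ Summable fun n : ℕ => useq m φ (n + 1) := by
  intro hsum
  apply hs
  have hφp : ∀ n : ℕ, 0 < φ (n + 1) := fun n => hφ (n+1) (by omega)
  have hmin : Summable (fun n : ℕ => min 1 (1 / φ (n+1))) := by
    apply Summable.of_nonneg_of_le ?_ ?_ hsum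
    · intro n
      exact le_min zero_le_one (le_of_lt (div_pos one_pos (hφp n)))
    · intro n
      exact min_le_useq hm φ (by omega) (hφp n)
  have h0 : Tendsto (fun n : ℕ => min 1 (1 / φ (n+1))) atTop (nhds 0) :=
    hmin.tendsto_atTop_zero
  have hev : ∀ᶠ n : ℕ in atTop, min 1 (1 / φ (n+1)) = 1 / φ (n+1) := by
    filter_upwards [h0.eventually (gt_mem_nhds (by norm_num : (0:ℝ) < 1))] with n hn
    rcases min_cases 1 (1 / φ (n+1)) with ⟨he, _⟩ | ⟨he, _⟩
    · rw [he] at hn; linarith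
    · exact he
  obtain ⟨M, hM⟩ := eventually_atTop.1 hev
  have h1 : Summable (fun n : ℕ => min 1 (1 / φ (n + M + 1))) :=
    (summable_nat_add_iff M).2 hmin
  have h2 : Summable (fun n : ℕ => 1 / φ (n + M + 1)) :=
    h1.congr fun n => hM (n + M) (by omega)
  exact (summable_nat_add_iff M).1 h2

lemma FsetInf_null (hm : 2 ≤ m) (φ : ℕ → ℝ) (hφ : ∀ n, 1 ≤ n → 0 < φ n)
    (hs : ¬ Summable fun n : ℕ => 1 / φ (n + 1)) (N : ℕ) :
    volume (FsetInf m N φ) = 0 := by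
  have hθ := th_pos hm
  have husum := not_summable_useq hm φ hφ hs
  have hnn : ∀ n : ℕ, 0 ≤ useq m φ (n+1) := fun n => useq_nonneg
  have hS : Tendsto (fun n => ∑ i ∈ Finset.range n, useq m φ (i+1)) atTop atTop :=
    (not_summable_iff_tendsto_nat_atTop_of_nonneg hnn).1 husum
  have hIoc : ∀ n, ∑ j ∈ Finset.Ioc 0 n, useq m φ j
      = ∑ i ∈ Finset.range n, useq m φ (i+1) := by
    intro n
    induction n with
    | zero => simp
    | succ k ih => rw [Finset.sum_Ioc_succ_top (Nat.zero_le _), Finset.sum_range_succ, ih]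
  have hS0 : Tendsto (fun n => ∑ j ∈ Finset.Ioc 0 n, useq m φ j) atTop atTop := by
    apply Tendsto.congr (fun n => (hIoc n).symm) hS
  have hT : Tendsto (fun n => ∑ j ∈ Finset.Ioc N n, useq m φ j) atTop atTop := by
    apply Tendsto.congr' ?_ (tendsto_atTop_add_const_right atTop
      (-(∑ j ∈ Finset.Ioc 0 N, useq m φ j)) hS0)
    filter_upwards [eventually_ge_atTop N] with n hn
    have hcons := Finset.sum_Ioc_consecutive (useq m φ) (Nat.zero_le N) hn
    linarith
  have hbound : ∀ᶠ n in atTop, volume (FsetInf m N φ) ≤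
      ENNReal.ofReal (th m * Real.exp (-(∑ j ∈ Finset.Ioc N n, useq m φ j))) := by
    filter_upwards [eventually_ge_atTop N] with n hn
    calc volume (FsetInf m N φ)
        ≤ volume (Fset m N φ n) := measure_mono (FsetInf_subset N n)
      _ ≤ ENNReal.ofReal (th m * ∏ j ∈ Finset.Ioc N n, rho m φ j) := Fset_bound hm φ N n hn
      _ ≤ ENNReal.ofReal (th m * Real.exp (-(∑ j ∈ Finset.Ioc N n, useq m φ j))) :=
          ENNReal.ofReal_le_ofReal (mul_le_mul_of_nonneg_left (prod_rho_le hm φ N n) hθ.le)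
  have hrhs : Tendsto (fun n => ENNReal.ofReal
      (th m * Real.exp (-(∑ j ∈ Finset.Ioc N n, useq m φ j)))) atTop (nhds 0) := by
    have h1 : Tendsto (fun n => -(∑ j ∈ Finset.Ioc N n, useq m φ j)) atTop atBot :=
      (tendsto_neg_atTop_atBot).comp hT
    have h2 : Tendsto (fun n => Real.exp (-(∑ j ∈ Finset.Ioc N n, useq m φ j)))
        atTop (nhds 0) := Real.tendsto_exp_atBot.comp h1
    have h3 := h2.const_mul (th m)
    rw [mul_zero] at h3
    have h4 := (ENNReal.continuous_ofReal.tendsto 0).comp h3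
    simpa [Function.comp_def] using h4
  exact le_antisymm (ge_of_tendsto hrhs hbound) zero_le



/-- Borel–Bernstein, divergence part: if ∑ 1/φ(n) = ∞ then
λ_θ({x ∈ Ω : a_n(x) > φ(n) i.o.}) = 1. -/
theorem stmt_9 (m : ℕ) (hm : 2 ≤ m) (φ : ℕ → ℝ) (hφ : ∀ n, 1 ≤ n → 0 < φ n)
    (hs : ¬ Summable fun n : ℕ => 1 / φ (n + 1)) :
    lam m {x | x ∈ Omega m ∧ {n : ℕ | 1 ≤ n ∧ φ n < (a m n x : ℝ)}.Infinite} = 1 := by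
  have hθ := th_pos hm
  set A := {x | x ∈ Omega m ∧ {n : ℕ | 1 ≤ n ∧ φ n < (a m n x : ℝ)}.Infinite} with hA
  set Bad := (Ioo 0 (th m) \ Om m) ∪ {x : ℝ | ¬ Irrational x} ∪ ⋃ N, FsetInf m N φ with hBadDef
  have hBad1 : volume (Ioo 0 (th m) \ Om m) = 0 :=
    Set.Countable.measure_zero (bad_countable hm) _
  have hBad2 : volume {x : ℝ | ¬ Irrational x} = 0 := by
    have : {x : ℝ | ¬ Irrational x} = Set.range ((↑) : ℚ → ℝ) := by
      ext x; simp [Irrational]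
    rw [this]
    exact Set.Countable.measure_zero (Set.countable_range _) _
  have hBad3 : volume (⋃ N, FsetInf m N φ) = 0 :=
    measure_iUnion_null fun N => FsetInf_null hm φ hφ hs N
  have hBad : volume Bad = 0 := by
    rw [hBadDef]
    exact measure_union_null (measure_union_null hBad1 hBad2) hBad3
  have hsub : Ioo 0 (th m) \ Bad ⊆ A := by
    rintro x ⟨hxI, hxB⟩
    rw [hBadDef] at hxB
    simp only [Set.mem_union, Set.mem_iUnion, not_or, not_exists] at hxB
    obtain ⟨⟨hB1, hB2⟩, hB3⟩ := hxB
    have hxOm : x ∈ Om m := by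
      by_contra h
      exact hB1 ⟨hxI, h⟩
    have hxIrr : Irrational x := by
      by_contra h
      exact hB2 h
    refine ⟨⟨hxI, hxIrr⟩, ?_⟩
    apply Set.infinite_of_not_bddAbove
    rintro ⟨Nb, hNb⟩
    have hx3 := hB3 Nb
    have : ∃ j : ℕ, Nb < j ∧ φ j < (a m j x : ℝ) := by
      by_contra hcon
      push_neg at hcon
      exact hx3 ⟨hxOm, fun j hj => hcon j hj⟩
    obtain ⟨j, hj1, hj2⟩ := this
    have hjS : j ∈ {n : ℕ | 1 ≤ n ∧ φ n < (a m n x : ℝ)} := ⟨by omega, hj2⟩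
    exact absurd (hNb hjS) (by omega)
  have hA_sub : A ⊆ Ioo 0 (th m) := fun x hx => hx.1.1
  have h1 : volume (Ioo 0 (th m) \ Bad) = ENNReal.ofReal (th m) := by
    rw [measure_diff_null hBad, Real.volume_Ioo, sub_zero]
  have h2 : ENNReal.ofReal (th m) ≤ volume A := h1 ▸ measure_mono hsub
  have h3 : volume A ≤ ENNReal.ofReal (th m) := by
    calc volume A ≤ volume (Ioo 0 (th m)) := measure_mono hA_sub
      _ = ENNReal.ofReal (th m) := by rw [Real.volume_Ioo, sub_zero]
  have hvol : volume A = ENNReal.ofReal (th m) := le_antisymm h3 h2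
  rw [lam, hvol, ENNReal.toReal_ofReal hθ.le, div_self (ne_of_gt hθ)]

end Theta
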